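/- Let W be an ℓ×ℓ real positive definite matrix, Γ an ℓ×q real matrix such that Ψ := Γᵀ W⁻¹ Γ is positive definite, and z ∈ ℝ^ℓ with c(z) := Ψ⁻¹ Γᵀ W⁻¹ z. Then for every q×q real positive definite V, the minimum over e ∈ ℝ^q of the field implausibility (z − Γe)ᵀ (Γ V Γᵀ + W)⁻¹ (z − Γe) equals the reconstruction error (z − Γ c(z))ᵀ W⁻¹ (z − Γ c(z)), and this minimum is attained at e = c(z). -/

import Mathlib

open Matrix

/-- The best implausibility achievable over the basis subspace is precisely the `W`-norm
reconstruction error of `z` on the basis: the field implausibility is bounded below by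
the reconstruction error for every `e`, and the bound is attained at `e = c(z)`. -/
theorem min_field_implausibility_eq_reconstruction_error
    {ℓ q : ℕ} (W : Matrix (Fin ℓ) (Fin ℓ) ℝ) (hW : W.PosDef)
    (Γ : Matrix (Fin ℓ) (Fin q) ℝ) (hΨ : (Γᵀ * W⁻¹ * Γ).PosDef)
    (z : Fin ℓ → ℝ) :
    ∀ (V : Matrix (Fin q) (Fin q) ℝ), V.PosDef →
      (∀ e : Fin q → ℝ,
        (z - Γ *ᵥ (((Γᵀ * W⁻¹ * Γ)⁻¹ * Γᵀ * W⁻¹) *ᵥ z)) ⬝ᵥ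
            (W⁻¹ *ᵥ (z - Γ *ᵥ (((Γᵀ * W⁻¹ * Γ)⁻¹ * Γᵀ * W⁻¹) *ᵥ z))) ≤
          (z - Γ *ᵥ e) ⬝ᵥ ((Γ * V * Γᵀ + W)⁻¹ *ᵥ (z - Γ *ᵥ e))) ∧
      (z - Γ *ᵥ (((Γᵀ * W⁻¹ * Γ)⁻¹ * Γᵀ * W⁻¹) *ᵥ z)) ⬝ᵥ
          ((Γ * V * Γᵀ + W)⁻¹ *ᵥ (z - Γ *ᵥ (((Γᵀ * W⁻¹ * Γ)⁻¹ * Γᵀ * W⁻¹) *ᵥ z))) =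
        (z - Γ *ᵥ (((Γᵀ * W⁻¹ * Γ)⁻¹ * Γᵀ * W⁻¹) *ᵥ z)) ⬝ᵥ
          (W⁻¹ *ᵥ (z - Γ *ᵥ (((Γᵀ * W⁻¹ * Γ)⁻¹ * Γᵀ * W⁻¹) *ᵥ z))) := by
  intro V hV
  set Ψ : Matrix (Fin q) (Fin q) ℝ := Γᵀ * W⁻¹ * Γ with hΨdef
  set c : Fin q → ℝ := ((Ψ⁻¹ * Γᵀ * W⁻¹) *ᵥ z) with hc
  set r : Fin ℓ → ℝ := z - Γ *ᵥ c with hr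
  have hWunit : IsUnit W.det := isUnit_iff_ne_zero.mpr hW.det_pos.ne'
  have hΨunit : IsUnit Ψ.det := isUnit_iff_ne_zero.mpr hΨ.det_pos.ne'
  -- key orthogonality: Γᵀ W⁻¹ r = 0
  have hkey : (Γᵀ * W⁻¹) *ᵥ r = 0 := by
    have : (Γᵀ * W⁻¹) *ᵥ (Γ *ᵥ c) = (Γᵀ * W⁻¹) *ᵥ z := by
      rw [hc, mulVec_mulVec, mulVec_mulVec, ← Matrix.mul_assoc, ← Matrix.mul_assoc,
        Matrix.mul_assoc (Γᵀ * W⁻¹ * Γ * Ψ⁻¹)]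
      rw [show Γᵀ * W⁻¹ * Γ * Ψ⁻¹ = 1 from Matrix.mul_nonsing_inv _ hΨunit, Matrix.one_mul]
    rw [hr, mulVec_sub, this, sub_self]
  set S : Matrix (Fin ℓ) (Fin ℓ) ℝ := Γ * V * Γᵀ + W with hS
  have hPSD : (Γ * V * Γᵀ).PosSemidef := by
    have := hV.posSemidef.mul_mul_conjTranspose_same Γ
    simpa [Matrix.conjTranspose_eq_transpose_of_trivial] using this
  have hSpd : S.PosDef := Matrix.PosDef.posSemidef_add hPSD hW
  have hSunit : IsUnit S.det := isUnit_iff_ne_zero.mpr hSpd.det_pos.ne'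
  -- S⁻¹ r = W⁻¹ r
  have hSr : S⁻¹ *ᵥ r = W⁻¹ *ᵥ r := by
    have h1 : S *ᵥ (W⁻¹ *ᵥ r) = r := by
      rw [hS, add_mulVec]
      have h2 : (Γ * V * Γᵀ) *ᵥ (W⁻¹ *ᵥ r) = 0 := by
        rw [mulVec_mulVec, Matrix.mul_assoc (Γ * V), ← mulVec_mulVec, hkey, mulVec_zero]
      have h3 : W *ᵥ (W⁻¹ *ᵥ r) = r := by
        rw [mulVec_mulVec, Matrix.mul_nonsing_inv _ hWunit, one_mulVec]
      rw [h2, h3, zero_add]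
    calc S⁻¹ *ᵥ r = S⁻¹ *ᵥ (S *ᵥ (W⁻¹ *ᵥ r)) := by rw [h1]
      _ = (S⁻¹ * S) *ᵥ (W⁻¹ *ᵥ r) := by rw [mulVec_mulVec]
      _ = W⁻¹ *ᵥ r := by rw [Matrix.nonsing_inv_mul _ hSunit, one_mulVec]
  have hSinvSymm : (S⁻¹)ᵀ = S⁻¹ := by
    rw [Matrix.transpose_nonsing_inv]
    congr 1
    have := hSpd.isHermitian
    exact (show S.IsSymm by simpa [Matrix.conjTranspose_eq_transpose_of_trivial] using this)
  have hW8 : W⁻¹ᵀ = W⁻¹ := by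
    rw [Matrix.transpose_nonsing_inv]
    congr 1
    exact (show W.IsSymm by simpa [Matrix.conjTranspose_eq_transpose_of_trivial] using hW.isHermitian)
  -- cross terms vanish
  have hcross : ∀ u : Fin q → ℝ, (Γ *ᵥ u) ⬝ᵥ (W⁻¹ *ᵥ r) = 0 := by
    intro u
    rw [dotProduct_comm, dotProduct_mulVec, ← mulVec_transpose, mulVec_mulVec,
      hkey, zero_dotProduct]
  -- equality part
  have heq : r ⬝ᵥ (S⁻¹ *ᵥ r) = r ⬝ᵥ (W⁻¹ *ᵥ r) := by rw [hSr]
  refine ⟨?_, heq⟩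
  intro e
  have hdecomp : z - Γ *ᵥ e = r + Γ *ᵥ (c - e) := by
    rw [hr, mulVec_sub]; abel
  rw [hdecomp]
  set u : Fin q → ℝ := c - e with hu
  have expand : (r + Γ *ᵥ u) ⬝ᵥ (S⁻¹ *ᵥ (r + Γ *ᵥ u)) =
      r ⬝ᵥ (S⁻¹ *ᵥ r) + r ⬝ᵥ (S⁻¹ *ᵥ (Γ *ᵥ u)) + (Γ *ᵥ u) ⬝ᵥ (S⁻¹ *ᵥ r)
        + (Γ *ᵥ u) ⬝ᵥ (S⁻¹ *ᵥ (Γ *ᵥ u)) := by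
    simp only [mulVec_add, dotProduct_add, add_dotProduct]
    ring
  have hc1 : (Γ *ᵥ u) ⬝ᵥ (S⁻¹ *ᵥ r) = 0 := by rw [hSr]; exact hcross u
  have hc2 : r ⬝ᵥ (S⁻¹ *ᵥ (Γ *ᵥ u)) = 0 := by
    rw [dotProduct_mulVec, ← mulVec_transpose, hSinvSymm, hSr, dotProduct_comm]
    exact hcross u
  have hpos : 0 ≤ (Γ *ᵥ u) ⬝ᵥ (S⁻¹ *ᵥ (Γ *ᵥ u)) := by
    have := hSpd.inv.posSemidef.dotProduct_mulVec_nonneg (Γ *ᵥ u)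
    simpa using this
  rw [expand, heq, hc1, hc2]
  linarith
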